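/- Suppose that for all large t, the probability ε_t that an active tracer visits the origin during [0,t] satisfies ε_t ≥ ε > 0, and that the probability an active tracer visits the origin during [0,T] is at most δ²T/t for fixed T (where the coupling parameter m = δ²/t). Then P[ξ_s(0) ≠ 0 for some s ≥ T] ≥ ε/2 for every T, and hence P[origin is visited at arbitrarily large times] ≥ ε/2 > 0. -/
import Mathlib


open MeasureTheory Filter
open scoped ENNReal

/-- If the probability that an active tracer visits the origin during `[0,t]` is
uniformly bounded below by `ε`, while visits during `[0,T]` have probability at most
`δ²T/t`, then `P[ξ_s(0) ≠ 0 for some s ≥ T] ≥ ε/2` for every `T`, hence the origin is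
visited at arbitrarily large times with probability at least `ε/2`. -/
theorem uniform_tracer_bound_implies_recurrence
    {Ω : Type} [MeasurableSpace Ω] (P : Measure Ω) [IsProbabilityMeasure P]
    (ξ : ℝ → Ω → ℤ)                 -- configuration at the origin
    (B : ℝ → Set Ω)                 -- an active tracer visits the origin during [0,t]
    (Bm Bp : ℝ → ℝ → Set Ω)         -- visits during [0,T], resp. [T,t]
    (ε δ : ℝ) (hε : 0 < ε)
    (hB : ∀ᶠ t in atTop, ENNReal.ofReal ε ≤ P (B t))
    (hsplit : ∀ T t, B t ⊆ Bm T t ∪ Bp T t)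
    (hBm : ∀ T, 0 < T → ∀ t, 0 < t → P (Bm T t) ≤ ENNReal.ofReal (δ ^ 2 * T / t))
    -- the presence of an active tracer forces ξ or ξᵐ to be nonzero, and the two
    -- systems have the same law
    (hBp : ∀ T t, P (Bp T t) ≤ 2 * P {ω | ∃ s, T ≤ s ∧ ξ s ω ≠ 0})
    (hmeas : ∀ T : ℝ, MeasurableSet {ω | ∃ s, T ≤ s ∧ ξ s ω ≠ 0}) :
    (∀ T : ℝ, ENNReal.ofReal (ε / 2) ≤ P {ω | ∃ s, T ≤ s ∧ ξ s ω ≠ 0}) ∧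
    ENNReal.ofReal (ε / 2) ≤ P {ω | ∀ T : ℝ, ∃ s, T ≤ s ∧ ξ s ω ≠ 0} := by
  set A : ℝ → Set Ω := fun T => {ω | ∃ s, T ≤ s ∧ ξ s ω ≠ 0} with hA
  have hanti : ∀ T₁ T₂, T₁ ≤ T₂ → A T₂ ⊆ A T₁ := by
    intro T₁ T₂ h ω hω
    obtain ⟨s, hs, hne⟩ := hω
    exact ⟨s, le_trans h hs, hne⟩
  have key : ∀ T : ℝ, 0 < T → ENNReal.ofReal (ε / 2) ≤ P (A T) := by
    intro T hT
    have h2 : ENNReal.ofReal ε ≤ 2 * P (A T) := by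
      apply ENNReal.le_of_forall_pos_le_add
      intro η hη _
      rw [eventually_atTop] at hB
      obtain ⟨t0, ht0⟩ := hB
      set t : ℝ := max t0 (max 1 (δ ^ 2 * T / η)) with ht
      have htpos : (0:ℝ) < t :=
        lt_of_lt_of_le one_pos (le_trans (le_max_left _ _) (le_max_right _ _))
      have h1 : ENNReal.ofReal ε ≤ P (B t) := ht0 t (le_max_left _ _)
      have h3 : P (B t) ≤ P (Bm T t) + P (Bp T t) :=
        le_trans (measure_mono (hsplit T t)) (measure_union_le _ _)
      have h4 : P (Bm T t) ≤ ENNReal.ofReal (δ ^ 2 * T / t) := hBm T hT t htpos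
      have h5 : δ ^ 2 * T / t ≤ (η : ℝ) := by
        rw [div_le_iff₀ htpos]
        have hle : δ ^ 2 * T / (η : ℝ) ≤ t :=
          le_trans (le_max_right _ _) (le_max_right _ _)
        have hηpos : (0:ℝ) < η := hη
        calc δ ^ 2 * T = (η : ℝ) * (δ ^ 2 * T / η) := by
              field_simp
          _ ≤ (η : ℝ) * t := by
              exact mul_le_mul_of_nonneg_left hle (le_of_lt hηpos)
      have h6 : P (Bm T t) ≤ (η : ℝ≥0∞) := by
        refine le_trans h4 ?_
        rw [← ENNReal.ofReal_coe_nnreal]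
        exact ENNReal.ofReal_le_ofReal h5
      calc ENNReal.ofReal ε ≤ P (Bm T t) + P (Bp T t) := le_trans h1 h3
        _ ≤ (η : ℝ≥0∞) + 2 * P (A T) := add_le_add h6 (hBp T t)
        _ = 2 * P (A T) + (η : ℝ≥0∞) := add_comm _ _
    have h7 : ENNReal.ofReal ε = 2 * ENNReal.ofReal (ε / 2) := by
      rw [← ENNReal.ofReal_ofNat, ← ENNReal.ofReal_mul (by norm_num),
        show (2:ℝ) * (ε / 2) = ε by ring]
    rw [h7] at h2
    exact (ENNReal.mul_le_mul_iff_right (by norm_num) (by norm_num)).mp h2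
  have part1 : ∀ T : ℝ, ENNReal.ofReal (ε / 2) ≤ P (A T) := by
    intro T
    refine le_trans (key (max T 1) (lt_of_lt_of_le one_pos (le_max_right _ _))) ?_
    exact measure_mono (hanti T (max T 1) (le_max_left _ _))
  refine ⟨part1, ?_⟩
  have hset : {ω | ∀ T : ℝ, ∃ s, T ≤ s ∧ ξ s ω ≠ 0} = ⋂ n : ℕ, A n := by
    ext ω
    simp only [Set.mem_setOf_eq, Set.mem_iInter, hA]
    constructor
    · intro h n; exact h n
    · intro h T
      obtain ⟨s, hs, hne⟩ := h ⌈T⌉₊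
      exact ⟨s, le_trans (Nat.le_ceil T) hs, hne⟩
  rw [hset]
  have hdir : Directed (· ⊇ ·) (fun n : ℕ => A n) := by
    intro i j
    exact ⟨max i j, hanti (i : ℝ) ((max i j : ℕ) : ℝ) (Nat.cast_le.mpr (le_max_left i j)),
      hanti (j : ℝ) ((max i j : ℕ) : ℝ) (Nat.cast_le.mpr (le_max_right i j))⟩
  rw [Directed.measure_iInter (μ := P) (s := fun n : ℕ => A (n : ℝ))
    (fun n => (hmeas (n : ℝ)).nullMeasurableSet) hdir ⟨0, measure_ne_top P _⟩]
  exact le_iInf fun n => part1 n
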